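/- For a connected graph G on n ≥ 2 vertices, ρ_1(G) ≥ min_{i≠j} sqrt( R̄_i R̄_j ), where R̄_i = T_i/R_i; equality holds if and only if G is pseudo resistance regular. -/

import Mathlib

open Matrix BigOperators Finset

noncomputable def allOnes (V : Type*) : Matrix V V ℝ := Matrix.of fun _ _ => 1

/-- The resistance distance matrix of a connected graph, via the matrix
`X = (L + (1/n)J)⁻¹`: `r_ij = X_ii + X_jj - 2X_ij`. -/
noncomputable def resistMatrix {V : Type*} [Fintype V] [DecidableEq V]
    (G : SimpleGraph V) [DecidableRel G.Adj] : Matrix V V ℝ :=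
  Matrix.of fun i j =>
    (G.lapMatrix ℝ + (Fintype.card V : ℝ)⁻¹ • allOnes V)⁻¹ i i +
    (G.lapMatrix ℝ + (Fintype.card V : ℝ)⁻¹ • allOnes V)⁻¹ j j -
    2 * (G.lapMatrix ℝ + (Fintype.card V : ℝ)⁻¹ • allOnes V)⁻¹ i j

/-- `W` is the Moore-Penrose inverse of `L`. -/
def IsMoorePenrose {V : Type*} [Fintype V] [DecidableEq V] (L W : Matrix V V ℝ) : Prop :=
  L * W * L = L ∧ W * L * W = W ∧ (L * W)ᵀ = L * W ∧ (W * L)ᵀ = W * L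

/-- Resistance degree `R_i`. -/
noncomputable def rdeg {V : Type*} [Fintype V] [DecidableEq V]
    (G : SimpleGraph V) [DecidableRel G.Adj] (i : V) : ℝ :=
  ∑ j, resistMatrix G i j

/-- Second resistance degree `T_i`. -/
noncomputable def rdeg2 {V : Type*} [Fintype V] [DecidableEq V]
    (G : SimpleGraph V) [DecidableRel G.Adj] (i : V) : ℝ :=
  ∑ j, resistMatrix G i j * rdeg G j

lemma posDef_LJ {V : Type*} [Fintype V] [DecidableEq V] (G : SimpleGraph V) [DecidableRel G.Adj]
    (hG : G.Connected) :
    (G.lapMatrix ℝ + (Fintype.card V : ℝ)⁻¹ • allOnes V).PosDef := by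
  have : Nonempty V := hG.nonempty
  have hcard : (0:ℝ) < (Fintype.card V : ℝ) := by exact_mod_cast Fintype.card_pos
  refine posDef_iff_dotProduct_mulVec.mpr ⟨?_, ?_⟩
  · have h1 : (G.lapMatrix ℝ).IsHermitian := (SimpleGraph.posSemidef_lapMatrix ℝ G).1
    have h2 : ((Fintype.card V : ℝ)⁻¹ • allOnes V).IsHermitian := by
      ext i j; simp [allOnes, conjTranspose]
    exact h1.add h2
  · intro x hx
    rw [star_trivial, add_mulVec, dotProduct_add, smul_mulVec, dotProduct_smul]
    have hJ : x ⬝ᵥ (allOnes V *ᵥ x) = (∑ i, x i) ^ 2 := by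
      simp [dotProduct, mulVec, allOnes, Finset.sum_mul, sq]
    have hL : 0 ≤ x ⬝ᵥ (G.lapMatrix ℝ *ᵥ x) := by
      simpa [star_trivial] using (SimpleGraph.posSemidef_lapMatrix ℝ G).dotProduct_mulVec_nonneg x
    rw [hJ]
    rcases lt_or_eq_of_le hL with h | h
    · have : 0 ≤ (Fintype.card V : ℝ)⁻¹ • (∑ i, x i) ^ 2 := by positivity
      linarith [this]
    · have hconst : ∀ i j : V, x i = x j := by
        have hz : Matrix.toLinearMap₂' ℝ (G.lapMatrix ℝ) x x = 0 := by
          rw [Matrix.toLinearMap₂'_apply']; exact h.symm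
        rw [SimpleGraph.lapMatrix_toLinearMap₂'_apply'_eq_zero_iff_forall_reachable] at hz
        intro i j; exact hz i j (hG.preconnected i j)
      obtain ⟨i⟩ := ‹Nonempty V›
      have hxi : x i ≠ 0 := by
        intro h0
        apply hx
        funext j
        rw [hconst j i, h0]; rfl
      have hsum : ∑ j, x j = (Fintype.card V : ℝ) * x i := by
        rw [Finset.sum_congr rfl (fun j _ => hconst j i)]
        simp [Finset.card_univ, mul_comm]
      have hpos : (0:ℝ) < (∑ j, x j) ^ 2 := by
        rw [hsum]
        positivity
      rw [← h]
      have : 0 < (Fintype.card V : ℝ)⁻¹ • (∑ i, x i) ^ 2 := by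
        rw [smul_eq_mul]; positivity
      linarith

lemma resist_diag {V : Type*} [Fintype V] [DecidableEq V] (G : SimpleGraph V) [DecidableRel G.Adj]
    (i : V) : resistMatrix G i i = 0 := by
  simp [resistMatrix]; ring

lemma resist_pos {V : Type*} [Fintype V] [DecidableEq V] (G : SimpleGraph V) [DecidableRel G.Adj]
    (hG : G.Connected) {i j : V} (hij : i ≠ j) : 0 < resistMatrix G i j := by
  set X := (G.lapMatrix ℝ + (Fintype.card V : ℝ)⁻¹ • allOnes V)⁻¹ with hX
  have hPD : X.PosDef := (posDef_LJ G hG).inv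
  have hsym : ∀ a b, X a b = X b a := by
    intro a b
    have := hPD.isHermitian
    rw [Matrix.IsHermitian] at this
    conv_lhs => rw [← this]
    simp [conjTranspose_apply]
  set w : V → ℝ := fun a => (if a = i then (1:ℝ) else 0) - (if a = j then 1 else 0) with hw
  have hw0 : w ≠ 0 := by
    intro h
    have := congrFun h i
    simp [hw, hij] at this
  have hq := hPD.dotProduct_mulVec_pos hw0
  rw [star_trivial] at hq
  have hcalc : w ⬝ᵥ (X *ᵥ w) = resistMatrix G i j := by
    have hmv : ∀ a, (X *ᵥ w) a = X a i - X a j := by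
      intro a
      simp [mulVec, dotProduct, hw, mul_sub, sub_mul, Finset.sum_sub_distrib, mul_ite, mul_one,
        mul_zero, Finset.sum_ite_eq', Finset.mem_univ]
    rw [dotProduct]
    rw [Finset.sum_congr rfl (fun a _ => by rw [hmv a])]
    simp only [hw, sub_mul, mul_sub, ite_mul, one_mul, zero_mul, Finset.sum_sub_distrib,
      Finset.sum_ite_eq', Finset.mem_univ, if_true]
    rw [resistMatrix]
    simp only [Matrix.of_apply, ← hX]
    rw [hsym j i]
    ring
  rw [hcalc] at hq
  exact hq

lemma exists_pos_eigenvector {n : ℕ} (hn : 2 ≤ n) (A : Matrix (Fin n) (Fin n) ℝ)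
    (hA : A.IsHermitian) (hoff : ∀ i j : Fin n, i ≠ j → 0 < A i j) (hdiag : ∀ i, A i i = 0)
    (ρ : ℝ) (hρ : IsGreatest (Set.range hA.eigenvalues) ρ) :
    0 < ρ ∧ ∃ v : Fin n → ℝ, (∀ i, 0 < v i) ∧ A *ᵥ v = ρ • v := by
  have hAnn : ∀ i j : Fin n, 0 ≤ A i j := by
    intro i j
    rcases eq_or_ne i j with rfl | h
    · rw [hdiag]
    · exact (hoff i j h).le
  set M : Matrix (Fin n) (Fin n) ℝ := ρ • (1 : Matrix (Fin n) (Fin n) ℝ) - A with hMdef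
  -- M is positive semidefinite
  have hU : (hA.eigenvectorUnitary : Matrix (Fin n) (Fin n) ℝ) *
      star (hA.eigenvectorUnitary : Matrix (Fin n) (Fin n) ℝ) = 1 :=
    (Matrix.mem_unitaryGroup_iff).mp (hA.eigenvectorUnitary).2
  have hdiagM : M = (hA.eigenvectorUnitary : Matrix (Fin n) (Fin n) ℝ) *
      diagonal (fun i => ρ - hA.eigenvalues i) *
      star (hA.eigenvectorUnitary : Matrix (Fin n) (Fin n) ℝ) := by
    have hsd : diagonal (fun i => ρ - hA.eigenvalues i) =
        ρ • (1 : Matrix (Fin n) (Fin n) ℝ) - diagonal (RCLike.ofReal ∘ hA.eigenvalues) := by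
      ext i j
      rcases eq_or_ne i j with rfl | h
      · simp [diagonal, Matrix.one_apply]
      · simp [diagonal, Matrix.one_apply, h]
    have hsp := hA.spectral_theorem
    rw [Unitary.conjStarAlgAut_apply] at hsp
    rw [hsd, Matrix.mul_sub, Matrix.sub_mul, ← hsp]
    
    rw [Matrix.mul_smul, Matrix.mul_one, Matrix.smul_mul, hU]
  have hM : M.PosSemidef := by
    rw [hdiagM]
    have hd : ∀ i, 0 ≤ ρ - hA.eigenvalues i := by
      intro i
      have := hρ.2 ⟨i, rfl⟩
      linarith
    have := (Matrix.PosSemidef.diagonal (fun i => hd i)).mul_mul_conjTranspose_same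
      (hA.eigenvectorUnitary : Matrix (Fin n) (Fin n) ℝ)
    simpa [Matrix.star_eq_conjTranspose] using this
  -- eigenvector for ρ
  obtain ⟨k, hk⟩ := hρ.1
  set u : Fin n → ℝ := ⇑(hA.eigenvectorBasis k) with hudef
  have hu : A *ᵥ u = ρ • u := by
    rw [hudef, hA.mulVec_eigenvectorBasis, hk]
  have hune : u ≠ 0 := by
    intro h
    exact hA.eigenvectorBasis.orthonormal.ne_zero k (by ext i; exact congrFun h i)
  set v : Fin n → ℝ := fun i => |u i| with hvdef
  have hvne : v ≠ 0 := by
    intro h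
    apply hune
    funext i
    have := congrFun h i
    simp [hvdef] at this
    simpa using this
  have hself : u ⬝ᵥ u = v ⬝ᵥ v := by
    simp [dotProduct, hvdef, ← sq, sq_abs]
  have hray : ρ * (v ⬝ᵥ v) ≤ v ⬝ᵥ (A *ᵥ v) := by
    have h1 : u ⬝ᵥ (A *ᵥ u) = ρ * (u ⬝ᵥ u) := by
      rw [hu, dotProduct_smul, smul_eq_mul]
    have h2 : u ⬝ᵥ (A *ᵥ u) ≤ v ⬝ᵥ (A *ᵥ v) := by
      simp only [dotProduct, mulVec]
      apply Finset.sum_le_sum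
      intro i _
      rw [Finset.mul_sum, Finset.mul_sum]
      apply Finset.sum_le_sum
      intro j _
      calc u i * (A i j * u j) ≤ |u i * (A i j * u j)| := le_abs_self _
        _ = v i * (A i j * v j) := by
            rw [abs_mul, abs_mul, abs_of_nonneg (hAnn i j)]
    rw [← hself, ← h1]; exact h2
  have hMv : M *ᵥ v = 0 := by
    rw [← hM.dotProduct_mulVec_zero_iff, star_trivial]
    have hge := hM.dotProduct_mulVec_nonneg v
    rw [star_trivial] at hge
    have hle : v ⬝ᵥ (M *ᵥ v) ≤ 0 := by
      rw [hMdef, sub_mulVec, dotProduct_sub, smul_mulVec, one_mulVec, dotProduct_smul,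
        smul_eq_mul]
      linarith
    linarith
  have hvA : A *ᵥ v = ρ • v := by
    have h0 : (ρ • (1 : Matrix (Fin n) (Fin n) ℝ)) *ᵥ v - A *ᵥ v = 0 := by
      rw [← sub_mulVec, ← hMdef, hMv]
    rw [smul_mulVec, one_mulVec] at h0
    exact (sub_eq_zero.mp h0).symm
  -- positivity of rho
  have hρpos : 0 < ρ := by
    have hge := hM.dotProduct_mulVec_nonneg (fun _ : Fin n => (1:ℝ))
    rw [star_trivial, hMdef, sub_mulVec, dotProduct_sub, smul_mulVec, one_mulVec,
      dotProduct_smul, smul_eq_mul] at hge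
    have h1 : (fun _ : Fin n => (1:ℝ)) ⬝ᵥ (fun _ : Fin n => (1:ℝ)) = (n : ℝ) := by
      simp [dotProduct]
    have h2 : (0:ℝ) < (fun _ : Fin n => (1:ℝ)) ⬝ᵥ (A *ᵥ (fun _ : Fin n => (1:ℝ))) := by
      simp only [dotProduct, mulVec, mul_one, one_mul]
      have i0 : Fin n := ⟨0, by omega⟩
      have i1 : Fin n := ⟨1, by omega⟩
      apply Finset.sum_pos'
      · intro i _; exact Finset.sum_nonneg fun j _ => hAnn i j
      · refine ⟨⟨0, by omega⟩, Finset.mem_univ _, ?_⟩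
        apply Finset.sum_pos'
        · intro j _; exact hAnn _ j
        · refine ⟨⟨1, by omega⟩, Finset.mem_univ _, hoff _ _ ?_⟩
          intro h
          have := congrArg Fin.val h
          simp at this
    rw [h1] at hge
    have hn0 : (0:ℝ) < (n:ℝ) := by positivity
    nlinarith
  -- positivity of v
  have hvpos : ∀ i, 0 < v i := by
    intro i
    rcases lt_or_eq_of_le (abs_nonneg (u i)) with h | h
    · exact h
    · exfalso
      have hvi : v i = 0 := h.symm
      have hrow : ∑ j, A i j * v j = 0 := by
        have := congrFun hvA i
        rw [mulVec] at this
        simp only [Pi.smul_apply, smul_eq_mul] at this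
        rw [dotProduct] at this
        rw [this, hvi, mul_zero]
      have hzero : ∀ j ∈ Finset.univ, A i j * v j = 0 :=
        (Finset.sum_eq_zero_iff_of_nonneg
          (fun j _ => mul_nonneg (hAnn i j) (abs_nonneg (u j)))).mp hrow
      apply hvne
      funext j
      rcases eq_or_ne j i with rfl | hji
      · exact hvi
      · have := hzero j (Finset.mem_univ j)
        have hApos := hoff i j (Ne.symm hji)
        have : v j = 0 := by
          rcases mul_eq_zero.mp this with h' | h'
          · exact absurd h' hApos.ne'
          · exact h'
        exact this
  exact ⟨hρpos, v, hvpos, hvA⟩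

lemma rbar_eq_of_card_two {V : Type*} [Fintype V] [DecidableEq V] (G : SimpleGraph V)
    [DecidableRel G.Adj] (hG : G.Connected) (hR : (resistMatrix G).IsHermitian)
    (hc : Fintype.card V = 2) :
    ∀ i j : V, rdeg2 G i / rdeg G i = rdeg2 G j / rdeg G j := by
  intro i j
  rcases eq_or_ne i j with rfl | hij
  · rfl
  have huniv : (Finset.univ : Finset V) = {i, j} := by
    symm
    apply Finset.eq_univ_of_card
    rw [Finset.card_insert_of_notMem (by simp [hij]), Finset.card_singleton, hc]
  have hsum : ∀ f : V → ℝ, ∑ k, f k = f i + f j := by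
    intro f; rw [huniv, Finset.sum_pair hij]
  have hsymm : resistMatrix G i j = resistMatrix G j i := by
    have h := congrFun (congrFun hR i) j
    simpa [conjTranspose_apply] using h.symm
  have hpos : 0 < resistMatrix G i j := resist_pos G hG hij
  have hdi : rdeg G i = resistMatrix G i j := by
    rw [rdeg, hsum, resist_diag, zero_add]
  have hdj : rdeg G j = resistMatrix G i j := by
    rw [rdeg, hsum, resist_diag, add_zero, hsymm]
  have h2i : rdeg2 G i = resistMatrix G i j * resistMatrix G i j := by
    rw [rdeg2, hsum, resist_diag, zero_mul, zero_add, hdj]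
  have h2j : rdeg2 G j = resistMatrix G i j * resistMatrix G i j := by
    rw [rdeg2, hsum, resist_diag, zero_mul, add_zero, ← hsymm, hdi]
  rw [hdi, hdj, h2i, h2j]


theorem resistance_spectral_radius_lower_bound_avg
    (n : ℕ) (hn : 2 ≤ n) (G : SimpleGraph (Fin n)) [DecidableRel G.Adj]
    (hG : G.Connected) (hR : (resistMatrix G).IsHermitian)
    (ρ : ℝ) (hρ : IsGreatest (Set.range hR.eigenvalues) ρ)
    (m : ℝ) (hm : IsLeast
      {x : ℝ | ∃ i j : Fin n, i ≠ j ∧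
        x = Real.sqrt ((rdeg2 G i / rdeg G i) * (rdeg2 G j / rdeg G j))} m) :
    m ≤ ρ ∧ (ρ = m ↔ ∀ i j : Fin n, rdeg2 G i / rdeg G i = rdeg2 G j / rdeg G j) := by
  classical
  have hoff : ∀ i j : Fin n, i ≠ j → 0 < resistMatrix G i j := fun i j h => resist_pos G hG h
  have hdiag : ∀ i, resistMatrix G i i = 0 := resist_diag G
  have hnn : ∀ i j, 0 ≤ resistMatrix G i j := by
    intro i j
    rcases eq_or_ne i j with rfl | h
    · rw [hdiag]
    · exact (hoff i j h).le
  obtain ⟨hρpos, v, hvpos, hvA⟩ := exists_pos_eigenvector hn (resistMatrix G) hR hoff hdiag ρ hρ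
  have hne' : ∀ i : Fin n, ∃ j : Fin n, j ≠ i := by
    intro i
    rcases eq_or_ne i ⟨0, by omega⟩ with rfl | h
    · exact ⟨⟨1, by omega⟩, by intro h; have := congrArg Fin.val h; simp at this⟩
    · exact ⟨⟨0, by omega⟩, fun h' => h h'.symm⟩
  have hrdeg : ∀ i, 0 < rdeg G i := by
    intro i
    obtain ⟨j, hj⟩ := hne' i
    exact Finset.sum_pos' (fun k _ => hnn i k) ⟨j, Finset.mem_univ _, hoff i j (Ne.symm hj)⟩
  have hrdeg2 : ∀ i, 0 < rdeg2 G i := by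
    intro i
    obtain ⟨j, hj⟩ := hne' i
    exact Finset.sum_pos' (fun k _ => mul_nonneg (hnn i k) (hrdeg k).le)
      ⟨j, Finset.mem_univ _, mul_pos (hoff i j (Ne.symm hj)) (hrdeg j)⟩
  obtain ⟨w, hwdef⟩ : ∃ w : Fin n → ℝ, w = fun i => v i / rdeg G i := ⟨_, rfl⟩
  have hwpos : ∀ i, 0 < w i := by
    intro i; rw [hwdef]; exact div_pos (hvpos i) (hrdeg i)
  have hvw : ∀ i, v i = rdeg G i * w i := by
    intro i
    rw [hwdef]
    simp only []
    rw [mul_comm, div_mul_cancel₀ _ (hrdeg i).ne']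
  have hkey : ∀ i, ρ * (rdeg G i * w i) = ∑ j, resistMatrix G i j * rdeg G j * w j := by
    intro i
    have h1 := congrFun hvA i
    rw [mulVec, dotProduct] at h1
    simp only [Pi.smul_apply, smul_eq_mul] at h1
    rw [← hvw i, ← h1]
    apply Finset.sum_congr rfl
    intro j _
    rw [hvw j]; ring
  -- min selections
  have hnonempty : (Finset.univ : Finset (Fin n)).Nonempty := ⟨⟨0, by omega⟩, Finset.mem_univ _⟩
  obtain ⟨i0, -, hi0⟩ := Finset.exists_min_image Finset.univ w hnonempty
  have herase : (Finset.univ.erase i0).Nonempty := by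
    rw [← Finset.card_pos, Finset.card_erase_of_mem (Finset.mem_univ _)]
    simp only [Finset.card_univ, Fintype.card_fin]
    omega
  obtain ⟨j0, hj0mem, hj0⟩ := Finset.exists_min_image (Finset.univ.erase i0) w herase
  have hji : j0 ≠ i0 := Finset.ne_of_mem_erase hj0mem
  have step_ge : ∀ (i : Fin n) (c : ℝ), (∀ k, k ≠ i → c ≤ w k) →
      rdeg2 G i * c ≤ ρ * (rdeg G i * w i) := by
    intro i c hc
    rw [hkey i, rdeg2, Finset.sum_mul]
    apply Finset.sum_le_sum
    intro j _
    rcases eq_or_ne j i with rfl | hj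
    · rw [hdiag]; simp
    · rw [mul_assoc, mul_assoc]
      exact mul_le_mul_of_nonneg_left
        (mul_le_mul_of_nonneg_left (hc j hj) (hrdeg j).le) (hnn i j)
  have step_le : ∀ (i : Fin n) (c : ℝ), (∀ k, k ≠ i → w k ≤ c) → 0 ≤ c →
      ρ * (rdeg G i * w i) ≤ rdeg2 G i * c := by
    intro i c hc hc0
    rw [hkey i, rdeg2, Finset.sum_mul]
    apply Finset.sum_le_sum
    intro j _
    rcases eq_or_ne j i with rfl | hj
    · rw [hdiag]; simp
    · rw [mul_assoc, mul_assoc]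
      exact mul_le_mul_of_nonneg_left
        (mul_le_mul_of_nonneg_left (hc j hj) (hrdeg j).le) (hnn i j)
  have ineq1 : rdeg2 G i0 * w j0 ≤ ρ * (rdeg G i0 * w i0) :=
    step_ge i0 (w j0) (fun k hk => hj0 k (Finset.mem_erase.mpr ⟨hk, Finset.mem_univ _⟩))
  have ineq2 : rdeg2 G j0 * w i0 ≤ ρ * (rdeg G j0 * w j0) :=
    step_ge j0 (w i0) (fun k _ => hi0 k (Finset.mem_univ _))
  set P : ℝ := (rdeg2 G i0 / rdeg G i0) * (rdeg2 G j0 / rdeg G j0) with hPdef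
  have hPpos : 0 < P := mul_pos (div_pos (hrdeg2 i0) (hrdeg i0)) (div_pos (hrdeg2 j0) (hrdeg j0))
  have hprod : (rdeg2 G i0 * w j0) * (rdeg2 G j0 * w i0) ≤
      (ρ * (rdeg G i0 * w i0)) * (ρ * (rdeg G j0 * w j0)) :=
    mul_le_mul ineq1 ineq2 (mul_pos (hrdeg2 j0) (hwpos i0)).le
      (mul_pos hρpos (mul_pos (hrdeg i0) (hwpos i0))).le
  have hP : P ≤ ρ ^ 2 := by
    rw [hPdef, div_mul_div_comm, div_le_iff₀ (mul_pos (hrdeg i0) (hrdeg j0))]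
    have hww : 0 < w i0 * w j0 := mul_pos (hwpos i0) (hwpos j0)
    rw [← mul_le_mul_iff_left₀ hww]
    nlinarith [hprod]
  have hsqrtP : Real.sqrt P ≤ ρ := by
    rw [show ρ = Real.sqrt (ρ ^ 2) from (Real.sqrt_sq hρpos.le).symm]
    exact Real.sqrt_le_sqrt hP
  have hmem : Real.sqrt P ∈ {x : ℝ | ∃ i j : Fin n, i ≠ j ∧
      x = Real.sqrt ((rdeg2 G i / rdeg G i) * (rdeg2 G j / rdeg G j))} :=
    ⟨i0, j0, Ne.symm hji, rfl⟩
  have hmρ : m ≤ ρ := le_trans (hm.2 hmem) hsqrtP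
  refine ⟨hmρ, ?_, ?_⟩
  · -- ρ = m → all equal
    intro hρm
    rcases Nat.lt_or_ge n 3 with h3 | h3
    · exact rbar_eq_of_card_two G hG hR (by rw [Fintype.card_fin]; omega)
    · -- n ≥ 3
      have hsP : Real.sqrt P = ρ := le_antisymm hsqrtP (by rw [hρm]; exact hm.2 hmem)
      have hPρ : P = ρ ^ 2 := by
        rw [← hsP, Real.sq_sqrt hPpos.le]
      have hApos : 0 < rdeg2 G i0 * w j0 := mul_pos (hrdeg2 i0) (hwpos j0)
      have hBpos : 0 < rdeg2 G j0 * w i0 := mul_pos (hrdeg2 j0) (hwpos i0)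
      have h1 : rdeg2 G i0 * rdeg2 G j0 = ρ ^ 2 * (rdeg G i0 * rdeg G j0) := by
        have h2 := hPρ
        rw [hPdef, div_mul_div_comm, div_eq_iff (mul_pos (hrdeg i0) (hrdeg j0)).ne'] at h2
        linarith
      have hprodeq : (ρ * (rdeg G i0 * w i0)) * (ρ * (rdeg G j0 * w j0)) =
          (rdeg2 G i0 * w j0) * (rdeg2 G j0 * w i0) := by
        linear_combination (-(w i0 * w j0)) * h1
      have hApos' : 0 < ρ * (rdeg G i0 * w i0) := lt_of_lt_of_le hApos ineq1
      have hAeq : ρ * (rdeg G i0 * w i0) = rdeg2 G i0 * w j0 := by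
        by_contra hne
        have hlt : rdeg2 G i0 * w j0 < ρ * (rdeg G i0 * w i0) :=
          lt_of_le_of_ne ineq1 (fun h => hne h.symm)
        have c1 : rdeg2 G i0 * w j0 * (rdeg2 G j0 * w i0) <
            ρ * (rdeg G i0 * w i0) * (rdeg2 G j0 * w i0) := mul_lt_mul_of_pos_right hlt hBpos
        have c2 : ρ * (rdeg G i0 * w i0) * (rdeg2 G j0 * w i0) ≤
            ρ * (rdeg G i0 * w i0) * (ρ * (rdeg G j0 * w j0)) :=
          mul_le_mul_of_nonneg_left ineq2 hApos'.le
        linarith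
      have hBeq : ρ * (rdeg G j0 * w j0) = rdeg2 G j0 * w i0 := by
        by_contra hne
        have hlt : rdeg2 G j0 * w i0 < ρ * (rdeg G j0 * w j0) :=
          lt_of_le_of_ne ineq2 (fun h => hne h.symm)
        have c1 : rdeg2 G i0 * w j0 * (rdeg2 G j0 * w i0) <
            rdeg2 G i0 * w j0 * (ρ * (rdeg G j0 * w j0)) := mul_lt_mul_of_pos_left hlt hApos
        have c2 : rdeg2 G i0 * w j0 * (ρ * (rdeg G j0 * w j0)) ≤
            ρ * (rdeg G i0 * w i0) * (ρ * (rdeg G j0 * w j0)) :=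
          mul_le_mul_of_nonneg_right ineq1 (mul_pos hρpos (mul_pos (hrdeg j0) (hwpos j0))).le
        linarith
      have hweq1 : ∀ k, k ≠ i0 → w k = w j0 := by
        intro k hk
        have hzero : ∑ j, resistMatrix G i0 j * rdeg G j * (w j - w j0) = 0 := by
          have hexp : ∀ j, resistMatrix G i0 j * rdeg G j * (w j - w j0) =
              resistMatrix G i0 j * rdeg G j * w j - resistMatrix G i0 j * rdeg G j * w j0 := by
            intro j; ring
          rw [Finset.sum_congr rfl (fun j _ => hexp j), Finset.sum_sub_distrib,
            ← Finset.sum_mul, ← rdeg2, ← hkey i0, hAeq, sub_self]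
        have hnneg : ∀ j ∈ Finset.univ, 0 ≤ resistMatrix G i0 j * rdeg G j * (w j - w j0) := by
          intro j _
          rcases eq_or_ne j i0 with rfl | hj
          · rw [hdiag]; simp
          · apply mul_nonneg (mul_nonneg (hnn i0 j) (hrdeg j).le)
            have := hj0 j (Finset.mem_erase.mpr ⟨hj, Finset.mem_univ _⟩)
            linarith
        have hterm := (Finset.sum_eq_zero_iff_of_nonneg hnneg).mp hzero k (Finset.mem_univ k)
        have hcoef : 0 < resistMatrix G i0 k * rdeg G k :=
          mul_pos (hoff i0 k (Ne.symm hk)) (hrdeg k)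
        rcases mul_eq_zero.mp hterm with h' | h'
        · exact absurd h' hcoef.ne'
        · linarith [sub_eq_zero.mp h']
      have hweq2 : ∀ k, k ≠ j0 → w k = w i0 := by
        intro k hk
        have hzero : ∑ j, resistMatrix G j0 j * rdeg G j * (w j - w i0) = 0 := by
          have hexp : ∀ j, resistMatrix G j0 j * rdeg G j * (w j - w i0) =
              resistMatrix G j0 j * rdeg G j * w j - resistMatrix G j0 j * rdeg G j * w i0 := by
            intro j; ring
          rw [Finset.sum_congr rfl (fun j _ => hexp j), Finset.sum_sub_distrib,
            ← Finset.sum_mul, ← rdeg2, ← hkey j0, hBeq, sub_self]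
        have hnneg : ∀ j ∈ Finset.univ, 0 ≤ resistMatrix G j0 j * rdeg G j * (w j - w i0) := by
          intro j _
          rcases eq_or_ne j j0 with rfl | hj
          · rw [hdiag]; simp
          · apply mul_nonneg (mul_nonneg (hnn j0 j) (hrdeg j).le)
            have := hi0 j (Finset.mem_univ _)
            linarith
        have hterm := (Finset.sum_eq_zero_iff_of_nonneg hnneg).mp hzero k (Finset.mem_univ k)
        have hcoef : 0 < resistMatrix G j0 k * rdeg G k :=
          mul_pos (hoff j0 k (Ne.symm hk)) (hrdeg k)
        rcases mul_eq_zero.mp hterm with h' | h'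
        · exact absurd h' hcoef.ne'
        · linarith [sub_eq_zero.mp h']
      obtain ⟨k, hk⟩ : ∃ k : Fin n, k ∉ ({i0, j0} : Finset (Fin n)) := by
        by_contra h
        push_neg at h
        have hsub : (Finset.univ : Finset (Fin n)) ⊆ {i0, j0} := fun x _ => h x
        have := Finset.card_le_card hsub
        rw [Finset.card_univ, Fintype.card_fin] at this
        have h2 : ({i0, j0} : Finset (Fin n)).card ≤ 2 := Finset.card_insert_le _ _ |>.trans (by simp)
        omega
      simp only [Finset.mem_insert, Finset.mem_singleton, not_or] at hk
      have hww0 : w i0 = w j0 := by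
        rw [← hweq2 k hk.2, hweq1 k hk.1]
      have hconst : ∀ k', w k' = w i0 := by
        intro k'
        rcases eq_or_ne k' i0 with rfl | hk'
        · rfl
        · rw [hweq1 k' hk', ← hww0]
      have hall : ∀ l, rdeg2 G l / rdeg G l = ρ := by
        intro l
        have h1 : ρ * (rdeg G l * w l) = rdeg2 G l * w l := by
          rw [hkey l, rdeg2, Finset.sum_mul]
          exact Finset.sum_congr rfl (fun j _ => by rw [hconst j, hconst l])
        rw [← mul_assoc] at h1
        have h2 : ρ * rdeg G l = rdeg2 G l := mul_right_cancel₀ (hwpos l).ne' h1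
        rw [div_eq_iff (hrdeg l).ne']
        linarith
      intro i j
      rw [hall i, hall j]
  · -- all equal → ρ = m
    intro hall
    obtain ⟨i2, j2, hij2, hm2⟩ := hm.1
    obtain ⟨i1, -, hi1⟩ := Finset.exists_max_image Finset.univ w hnonempty
    have hup : ρ * (rdeg G i1 * w i1) ≤ rdeg2 G i1 * w i1 :=
      step_le i1 (w i1) (fun k _ => hi1 k (Finset.mem_univ _)) (hwpos i1).le
    have hρle : ρ ≤ rdeg2 G i1 / rdeg G i1 := by
      rw [le_div_iff₀ (hrdeg i1)]
      have := hwpos i1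
      nlinarith [hup]
    have hmval : m = rdeg2 G i1 / rdeg G i1 := by
      rw [hm2, hall i2 i1, hall j2 i1]
      exact Real.sqrt_mul_self (div_pos (hrdeg2 i1) (hrdeg i1)).le
    apply le_antisymm
    · rw [hmval]; exact hρle
    · exact hmρ
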